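/- arXiv:2512.11809 — 7 statements merged into one kernel-verified Lean document; each statement's English description precedes it below -/
import Mathlib

section
/- Let X be an Archimedean vector lattice equipped with a convergence θ (satisfying axioms (1)–(4)), and let (x_α)_{α∈A} be a net in X with x_α ≥ 0 for all α and x ≥ 0. Then (x_α) is uθ-convergent to x if and only if x_α ∧ a →θ x ∧ a for every a ∈ X₊. -/
open Filter

/-- A convergence structure `θ` on a vector lattice `X`, assigning to nets (maps from
nonempty directed preordered index types) limit points, and satisfying axioms (1)–(4):
(1) constant nets converge; (2) linearity, and `t • x →θ 0` as the scalar net `t → 0`;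
(3) domination: if `x_α →θ 0` and `|y_α| ≤ |x_α|` then `y_α →θ 0`;
(4) every subnet of a `θ`-convergent net `θ`-converges to the same limit. -/
structure VLConvergence (X : Type*) [Lattice X] [AddCommGroup X] [Module ℝ X] where
  conv : ∀ {ι : Type} [Preorder ι] [IsDirected ι (· ≤ ·)] [Nonempty ι], (ι → X) → X → Prop
  conv_const : ∀ {ι : Type} [Preorder ι] [IsDirected ι (· ≤ ·)] [Nonempty ι] (x : X),
    conv (fun _ : ι => x) x
  conv_add_smul : ∀ {ι : Type} [Preorder ι] [IsDirected ι (· ≤ ·)] [Nonempty ι]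
    (f g : ι → X) (x y : X) (l : ℝ),
    conv f x → conv g y → conv (fun α => f α + l • g α) (x + l • y)
  conv_smul_zero : ∀ {ι : Type} [Preorder ι] [IsDirected ι (· ≤ ·)] [Nonempty ι]
    (t : ι → ℝ) (x : X), Filter.Tendsto t Filter.atTop (nhds (0 : ℝ)) →
    conv (fun α => t α • x) (0 : X)
  conv_dominated : ∀ {ι : Type} [Preorder ι] [IsDirected ι (· ≤ ·)] [Nonempty ι]
    (f g : ι → X), conv f 0 → (∀ α, |g α| ≤ |f α|) → conv g 0
  conv_subnet : ∀ {ι κ : Type} [Preorder ι] [IsDirected ι (· ≤ ·)] [Nonempty ι]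
    [Preorder κ] [IsDirected κ (· ≤ ·)] [Nonempty κ]
    (f : ι → X) (x : X) (φ : κ → ι), conv f x →
    (∀ α₀ : ι, ∃ β₀ : κ, ∀ β, β₀ ≤ β → α₀ ≤ φ β) → conv (fun β => f (φ β)) x

/-- The Archimedean property for a vector lattice. -/
def IsArchimedeanVL (X : Type*) [Lattice X] [AddCommGroup X] : Prop :=
  ∀ x y : X, 0 ≤ x → (∀ n : ℕ, n • x ≤ y) → x = 0

variable {X : Type*} [Lattice X] [AddCommGroup X]
  [CovariantClass X X (· + ·) (· ≤ ·)] [Module ℝ X] [PosSMulMono ℝ X]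

/-- The unbounded modification `uθ` of a convergence `θ`:
`x_α →uθ x` iff `(x_α ⊔ b) ⊓ c →θ (x ⊔ b) ⊓ c` for all `b ≤ c`. -/
def VLConvergence.uconv (θ : VLConvergence X)
    {ι : Type} [Preorder ι] [IsDirected ι (· ≤ ·)] [Nonempty ι]
    (f : ι → X) (x : X) : Prop :=
  ∀ b c : X, b ≤ c → θ.conv (fun α => (f α ⊔ b) ⊓ c) ((x ⊔ b) ⊓ c)

theorem stmt2 (hArch : IsArchimedeanVL X) (θ : VLConvergence X)
    {ι : Type} [Preorder ι] [IsDirected ι (· ≤ ·)] [Nonempty ι]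
    (f : ι → X) (x : X) (hf : ∀ α, 0 ≤ f α) (hx : 0 ≤ x) :
    θ.uconv f x ↔ ∀ a : X, 0 ≤ a → θ.conv (fun α => f α ⊓ a) (x ⊓ a) := by
  have hdist : ∀ u v w : X, (u ⊔ v) ⊓ w = u ⊓ w ⊔ v ⊓ w := by
    letI : DistribLattice X := AddCommGroup.toDistribLattice X
    exact fun u v w => inf_sup_right u v w
  constructor
  · intro h a ha
    have h0 := h 0 a ha
    have e : (fun α => (f α ⊔ 0) ⊓ a) = fun α => f α ⊓ a :=
      funext fun α => by rw [sup_of_le_left (hf α)]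
    rwa [e, sup_of_le_left hx] at h0
  · intro h b c hbc
    -- key identity: for 0 ≤ u and b ≤ c, (u ⊔ b) ⊓ c = ((u ⊓ (c ⊔ 0)) ⊔ b) ⊓ c
    have key : ∀ u : X, 0 ≤ u → (u ⊔ b) ⊓ c = ((u ⊓ (c ⊔ 0)) ⊔ b) ⊓ c := by
      intro u hu
      apply le_antisymm
      · refine le_inf ?_ inf_le_right
        have h1 : (u ⊔ b) ⊓ c ≤ (u ⊔ b) ⊓ (c ⊔ 0) :=
          inf_le_inf_left _ le_sup_left
        have h2 : (u ⊔ b) ⊓ (c ⊔ 0) = (u ⊓ (c ⊔ 0)) ⊔ (b ⊓ (c ⊔ 0)) :=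
          hdist u b (c ⊔ 0)
        have h3 : b ⊓ (c ⊔ 0) ≤ b := inf_le_left
        calc (u ⊔ b) ⊓ c ≤ (u ⊓ (c ⊔ 0)) ⊔ (b ⊓ (c ⊔ 0)) := h2 ▸ h1
          _ ≤ (u ⊓ (c ⊔ 0)) ⊔ b := sup_le_sup_left h3 _
      · exact inf_le_inf_right _ (sup_le_sup_right inf_le_left _)
    set a : X := c ⊔ 0 with ha
    have hconv : θ.conv (fun α => f α ⊓ a) (x ⊓ a) := h a le_sup_right
    set y : X := x ⊓ a with hy
    -- difference net tends to 0
    have hdiff : θ.conv (fun α => f α ⊓ a + (-1 : ℝ) • y) (y + (-1 : ℝ) • y) :=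
      θ.conv_add_smul _ _ _ _ _ hconv (θ.conv_const y)
    have hz : y + (-1 : ℝ) • y = 0 := by rw [neg_one_smul]; exact add_neg_cancel y
    rw [hz] at hdiff
    have hdom : θ.conv (fun α => ((f α ⊓ a) ⊔ b) ⊓ c - (y ⊔ b) ⊓ c) 0 := by
      refine θ.conv_dominated _ _ hdiff fun α => ?_
      have e1 : |f α ⊓ a + (-1 : ℝ) • y| = |f α ⊓ a - y| := by
        rw [neg_one_smul, ← sub_eq_add_neg]
      rw [e1]
      calc |((f α ⊓ a) ⊔ b) ⊓ c - (y ⊔ b) ⊓ c|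
          ≤ |(f α ⊓ a) ⊔ b - y ⊔ b| := abs_inf_sub_inf_le_abs _ _ _
        _ ≤ |f α ⊓ a - y| := abs_sup_sub_sup_le_abs _ _ _
    have hfin : θ.conv
        (fun α => ((f α ⊓ a) ⊔ b) ⊓ c - (y ⊔ b) ⊓ c + (1 : ℝ) • ((y ⊔ b) ⊓ c))
        (0 + (1 : ℝ) • ((y ⊔ b) ⊓ c)) :=
      θ.conv_add_smul _ _ _ _ _ hdom (θ.conv_const _)
    have e2 : (fun α => ((f α ⊓ a) ⊔ b) ⊓ c - (y ⊔ b) ⊓ c + (1 : ℝ) • ((y ⊔ b) ⊓ c))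
        = fun α => (f α ⊔ b) ⊓ c := by
      funext α
      rw [one_smul, sub_add_cancel, ← key (f α) (hf α)]
    have e3 : (0 : X) + (1 : ℝ) • ((y ⊔ b) ⊓ c) = (x ⊔ b) ⊓ c := by
      rw [one_smul, zero_add, hy, ← key x hx]
    rwa [e2, e3] at hfin
end

section
/- Let X be an Archimedean vector lattice equipped with a convergence θ (satisfying axioms (1)–(4)), and let (x_α)_{α∈A} and (y_α)_{α∈A} be nets in X indexed by the same directed set. If x_α →uθ x and y_α →uθ y, then x_α ∨ y_α →uθ x ∨ y and x_α ∧ y_α →uθ x ∧ y. -/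
open Filter
set_option maxHeartbeats 1000000

variable {X : Type*} [Lattice X] [AddCommGroup X]
  [CovariantClass X X (· + ·) (· ≤ ·)] [Module ℝ X] [PosSMulMono ℝ X]

section Aux
variable (θ : VLConvergence X) {ι : Type} [Preorder ι] [IsDirected ι (· ≤ ·)] [Nonempty ι]

lemma VLConvergence.conv_sub {f : ι → X} {x : X} (h : θ.conv f x) :
    θ.conv (fun α => f α - x) 0 := by
  have := θ.conv_add_smul f (fun _ : ι => x) x x (-1) h (θ.conv_const x)
  simpa [sub_eq_add_neg] using this

lemma VLConvergence.conv_of_sub {f : ι → X} {x : X} (h : θ.conv (fun α => f α - x) 0) :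
    θ.conv f x := by
  have := θ.conv_add_smul (fun α => f α - x) (fun _ : ι => x) 0 x 1 h (θ.conv_const x)
  simpa using this

lemma VLConvergence.conv_abs_sub {f : ι → X} {x : X} (h : θ.conv f x) :
    θ.conv (fun α => |f α - x|) 0 :=
  θ.conv_dominated (fun α => f α - x) (fun α => |f α - x|) (θ.conv_sub h)
    (fun α => by rw [abs_abs])

lemma VLConvergence.conv_sup {f g : ι → X} {x y : X}
    (hf : θ.conv f x) (hg : θ.conv g y) : θ.conv (fun α => f α ⊔ g α) (x ⊔ y) := by
  have hsum : θ.conv (fun α => |f α - x| + |g α - y|) 0 := by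
    have := θ.conv_add_smul (fun α => |f α - x|) (fun α => |g α - y|) 0 0 1 (θ.conv_abs_sub hf) (θ.conv_abs_sub hg)
    simpa using this
  refine θ.conv_of_sub (θ.conv_dominated _ _ hsum fun α => ?_)
  rw [abs_of_nonneg (add_nonneg (abs_nonneg (f α - x)) (abs_nonneg (g α - y)))]
  calc |f α ⊔ g α - x ⊔ y|
      = |(f α ⊔ g α - x ⊔ g α) + (x ⊔ g α - x ⊔ y)| := by rw [sub_add_sub_cancel]
    _ ≤ |f α ⊔ g α - x ⊔ g α| + |x ⊔ g α - x ⊔ y| := abs_add_le _ _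
    _ ≤ |f α - x| + |g α - y| := by
        refine add_le_add (abs_sup_sub_sup_le_abs _ _ _) ?_
        rw [sup_comm x (g α), sup_comm x y]
        exact abs_sup_sub_sup_le_abs _ _ _

lemma VLConvergence.conv_inf {f g : ι → X} {x y : X}
    (hf : θ.conv f x) (hg : θ.conv g y) : θ.conv (fun α => f α ⊓ g α) (x ⊓ y) := by
  have hsum : θ.conv (fun α => |f α - x| + |g α - y|) 0 := by
    have := θ.conv_add_smul (fun α => |f α - x|) (fun α => |g α - y|) 0 0 1 (θ.conv_abs_sub hf) (θ.conv_abs_sub hg)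
    simpa using this
  refine θ.conv_of_sub (θ.conv_dominated _ _ hsum fun α => ?_)
  rw [abs_of_nonneg (add_nonneg (abs_nonneg (f α - x)) (abs_nonneg (g α - y)))]
  calc |f α ⊓ g α - x ⊓ y|
      = |(f α ⊓ g α - x ⊓ g α) + (x ⊓ g α - x ⊓ y)| := by rw [sub_add_sub_cancel]
    _ ≤ |f α ⊓ g α - x ⊓ g α| + |x ⊓ g α - x ⊓ y| := abs_add_le _ _
    _ ≤ |f α - x| + |g α - y| := by
        refine add_le_add (abs_inf_sub_inf_le_abs _ _ _) ?_
        rw [inf_comm x (g α), inf_comm x y]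
        exact abs_inf_sub_inf_le_abs _ _ _

end Aux

theorem stmt3 (hArch : IsArchimedeanVL X) (θ : VLConvergence X)
    {ι : Type} [Preorder ι] [IsDirected ι (· ≤ ·)] [Nonempty ι]
    (x y : ι → X) (a b : X)
    (hx : θ.uconv x a) (hy : θ.uconv y b) :
    θ.uconv (fun α => x α ⊔ y α) (a ⊔ b) ∧ θ.uconv (fun α => x α ⊓ y α) (a ⊓ b) := by
  letI : DistribLattice X := AddCommGroup.toDistribLattice X
  constructor
  · intro u v huv
    have key : ∀ (p q : X), ((p ⊔ q ⊔ u) ⊓ v : X) = ((p ⊔ u) ⊓ v) ⊔ ((q ⊔ u) ⊓ v) := by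
      intro p q
      rw [← inf_sup_right, ← sup_sup_distrib_right]
    simp only [key]
    exact θ.conv_sup (hx u v huv) (hy u v huv)
  · intro u v huv
    have key : ∀ (p q : X), ((p ⊓ q ⊔ u) ⊓ v : X) = ((p ⊔ u) ⊓ v) ⊓ ((q ⊔ u) ⊓ v) := by
      intro p q
      rw [sup_inf_right, ← inf_inf_distrib_right]
    simp only [key]
    exact θ.conv_inf (hx u v huv) (hy u v huv)
end

section
/- Let X be an Archimedean vector lattice equipped with a convergence θ (satisfying axioms (1)–(4)), and let (x_α)_{α∈A} and (y_α)_{α∈A} be nets in X indexed by the same directed set. If x_α →uθ x and y_α →uθ y and λ ∈ ℝ, then λ x_α + y_α →uθ λ x + y. -/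
open Filter

variable {X : Type*} [Lattice X] [AddCommGroup X]
  [CovariantClass X X (· + ·) (· ≤ ·)] [Module ℝ X] [PosSMulMono ℝ X]

set_option linter.unusedSectionVars false

section helpers

lemma my_smul_inf (c : ℝ) (hc : 0 < c) (p q : X) : c • (p ⊓ q) = (c • p) ⊓ (c • q) := by
  apply le_antisymm
  · exact le_inf (smul_le_smul_of_nonneg_left inf_le_left hc.le)
      (smul_le_smul_of_nonneg_left inf_le_right hc.le)
  · have h1 : c⁻¹ • ((c • p) ⊓ (c • q)) ≤ p ⊓ q := by
      refine le_inf ?_ ?_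
      · have := smul_le_smul_of_nonneg_left (inf_le_left (a := c • p) (b := c • q))
          (inv_nonneg.mpr hc.le)
        simpa [smul_smul, inv_mul_cancel₀ hc.ne'] using this
      · have := smul_le_smul_of_nonneg_left (inf_le_right (a := c • p) (b := c • q))
          (inv_nonneg.mpr hc.le)
        simpa [smul_smul, inv_mul_cancel₀ hc.ne'] using this
    have := smul_le_smul_of_nonneg_left h1 hc.le
    simpa [smul_smul, mul_inv_cancel₀ hc.ne'] using this

lemma my_inf_add_ineq {p q u : X} (hp : 0 ≤ p) (hq : 0 ≤ q) (hu : 0 ≤ u) :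
    (p + q) ⊓ u ≤ p ⊓ u + q ⊓ u := by
  have h1 : p ⊓ u + (q ⊓ u) = ((p + q) ⊓ (u + q)) ⊓ ((p + u) ⊓ (u + u)) := by
    rw [add_inf, inf_add, inf_add]
  rw [h1]
  refine le_inf (le_inf inf_le_left ?_) (le_inf ?_ ?_)
  · exact inf_le_right.trans (le_add_of_nonneg_right hq)
  · exact inf_le_right.trans (le_add_of_nonneg_left hp)
  · exact inf_le_right.trans (le_add_of_nonneg_left hu)

lemma my_abs_smul_le (l : ℝ) (z : X) : |l • z| ≤ |l| • |z| := by
  have key : ∀ m : ℝ, m • z ≤ |m| • |z| := by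
    intro m
    rcases le_total 0 m with hm | hm
    · rw [abs_of_nonneg hm]; exact smul_le_smul_of_nonneg_left (le_abs_self z) hm
    · rw [abs_of_nonpos hm]
      have h2 : m • z = (-m) • (-z) := by rw [neg_smul, smul_neg, neg_neg]
      rw [h2]
      exact smul_le_smul_of_nonneg_left (neg_le_abs z) (neg_nonneg.mpr hm)
  have h3 : |l • z| = (l • z) ⊔ (-(l • z)) := rfl
  rw [h3]
  refine sup_le (key l) ?_
  rw [← neg_smul]
  simpa [abs_neg] using key (-l)

variable {ι : Type} [Preorder ι] [IsDirected ι (· ≤ ·)] [Nonempty ι]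

lemma conv_add' (θ : VLConvergence X) {f g : ι → X} {x y : X}
    (hf : θ.conv f x) (hg : θ.conv g y) : θ.conv (fun α => f α + g α) (x + y) := by
  simpa using θ.conv_add_smul f g x y 1 hf hg

lemma conv_smul' (θ : VLConvergence X) {f : ι → X} {x : X} (c : ℝ)
    (hf : θ.conv f x) : θ.conv (fun α => c • f α) (c • x) := by
  simpa using θ.conv_add_smul (fun _ => 0) f 0 x c (θ.conv_const 0) hf

lemma conv_sub_const' (θ : VLConvergence X) {f : ι → X} {x : X}
    (hf : θ.conv f x) : θ.conv (fun α => f α - x) 0 := by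
  have := θ.conv_add_smul f (fun _ => x) x x (-1) hf (θ.conv_const x)
  simpa [sub_eq_add_neg] using this

lemma conv_add_const' (θ : VLConvergence X) {f : ι → X} (x : X)
    (hf : θ.conv f 0) : θ.conv (fun α => f α + x) x := by
  have := θ.conv_add_smul f (fun _ => x) 0 x 1 hf (θ.conv_const x)
  simpa using this

lemma uconv_iff' (θ : VLConvergence X) (f : ι → X) (x : X) :
    θ.uconv f x ↔ ∀ u : X, 0 ≤ u → θ.conv (fun α => |f α - x| ⊓ u) 0 := by
  letI : DistribLattice X := AddCommGroup.toDistribLattice X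
  constructor
  · intro h u hu
    have hbc : x - u ≤ x + u := (sub_le_self x hu).trans (le_add_of_nonneg_right hu)
    have h1 := h (x - u) (x + u) hbc
    have hxx : (x ⊔ (x - u)) ⊓ (x + u) = x := by
      rw [sup_eq_left.mpr (sub_le_self x hu), inf_eq_left.mpr (le_add_of_nonneg_right hu)]
    rw [hxx] at h1
    have h2 := conv_sub_const' θ h1
    refine θ.conv_dominated _ _ h2 ?_
    intro α
    set z : X := f α - x with hz
    have hw : (f α ⊔ (x - u)) ⊓ (x + u) - x = (z ⊔ (-u)) ⊓ u := by
      rw [inf_sub, sup_sub]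
      have e1 : x - u - x = -u := by abel
      have e2 : x + u - x = u := by abel
      rw [e1, e2, hz]
    rw [hw]
    set w : X := (z ⊔ (-u)) ⊓ u with hwdef
    have hnn : (0 : X) ≤ |z| ⊓ u := le_inf (abs_nonneg z) hu
    rw [abs_of_nonneg hnn]
    have c1 : z ⊓ u ≤ |w| := le_trans (inf_le_inf_right u le_sup_left) (le_abs_self w)
    have c2 : (-z) ⊓ u ≤ |w| := by
      have hnw : -w = ((-z) ⊓ u) ⊔ (-u) := by
        rw [hwdef, neg_inf, neg_sup, neg_neg, sup_comm]
      have : (-z) ⊓ u ≤ -w := by rw [hnw]; exact le_sup_left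
      exact this.trans (neg_le_abs w)
    have habs : |z| ⊓ u = (z ⊓ u) ⊔ ((-z) ⊓ u) := by
      have : |z| = z ⊔ (-z) := rfl
      rw [this, inf_sup_right]
    rw [habs]
    exact sup_le c1 c2
  · intro h b c hbc
    have key := h (c - b) (sub_nonneg.mpr hbc)
    have hdom : θ.conv (fun α => (f α ⊔ b) ⊓ c - (x ⊔ b) ⊓ c) 0 := by
      refine θ.conv_dominated _ _ key ?_
      intro α
      set g : X := (f α ⊔ b) ⊓ c - (x ⊔ b) ⊓ c with hg
      have e1 : |g| ≤ |f α - x| := by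
        refine le_trans (abs_inf_sub_inf_le_abs _ _ _) ?_
        exact abs_sup_sub_sup_le_abs _ _ _
      have mem : ∀ v : X, b ≤ (v ⊔ b) ⊓ c ∧ (v ⊔ b) ⊓ c ≤ c := fun v =>
        ⟨le_inf le_sup_right hbc, inf_le_right⟩
      have e2 : |g| ≤ c - b := by
        have h1 : g ≤ c - b := by
          rw [hg]
          have := sub_le_sub (mem (f α)).2 (mem x).1
          exact this
        have h2 : -g ≤ c - b := by
          rw [hg, neg_sub]
          exact sub_le_sub (mem x).2 (mem (f α)).1
        calc |g| = g ⊔ (-g) := rfl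
        _ ≤ c - b := sup_le h1 h2
      have : |g| ≤ |f α - x| ⊓ (c - b) := le_inf e1 e2
      refine this.trans ?_
      exact le_abs_self _
    have := conv_add_const' θ ((x ⊔ b) ⊓ c) hdom
    simpa using this

end helpers

theorem stmt4 (hArch : IsArchimedeanVL X) (θ : VLConvergence X)
    {ι : Type} [Preorder ι] [IsDirected ι (· ≤ ·)] [Nonempty ι]
    (x y : ι → X) (a b : X) (l : ℝ)
    (hx : θ.uconv x a) (hy : θ.uconv y b) :
    θ.uconv (fun α => l • x α + y α) (l • a + b) := by
  rw [uconv_iff'] at hx hy ⊢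
  intro u hu
  set c : ℝ := |l| + 1 with hcdef
  have hc : (0:ℝ) < c := by positivity
  have hx' := hx (c⁻¹ • u) (smul_nonneg (inv_nonneg.mpr hc.le) hu)
  have h1 : θ.conv (fun α => c • (|x α - a| ⊓ (c⁻¹ • u))) 0 := by
    simpa using conv_smul' θ c hx'
  have h2 : θ.conv (fun α => c • (|x α - a| ⊓ (c⁻¹ • u)) + |y α - b| ⊓ u) 0 := by
    simpa using conv_add' θ h1 (hy u hu)
  refine θ.conv_dominated _ _ h2 ?_
  intro α
  set p : X := |x α - a| with hp
  set q : X := |y α - b| with hq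
  have hpnn : (0:X) ≤ p := abs_nonneg _
  have hqnn : (0:X) ≤ q := abs_nonneg _
  have hF : (0:X) ≤ c • (p ⊓ (c⁻¹ • u)) + q ⊓ u :=
    add_nonneg (smul_nonneg hc.le (le_inf hpnn (smul_nonneg (inv_nonneg.mpr hc.le) hu)))
      (le_inf hqnn hu)
  have hG : (0:X) ≤ |l • x α + y α - (l • a + b)| ⊓ u := le_inf (abs_nonneg _) hu
  rw [abs_of_nonneg hF, abs_of_nonneg hG]
  have e0 : l • x α + y α - (l • a + b) = l • (x α - a) + (y α - b) := by
    rw [smul_sub]; abel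
  have elp : |l| • p ≤ c • p := by
    have hd : c • p - |l| • p = p := by
      rw [← sub_smul, show c - |l| = 1 by rw [hcdef]; ring, one_smul]
    have : (0:X) ≤ c • p - |l| • p := by rw [hd]; exact hpnn
    exact sub_nonneg.mp this
  have e1 : |l • x α + y α - (l • a + b)| ≤ c • p + q := by
    rw [e0]
    refine (abs_add_le _ _).trans (add_le_add ?_ le_rfl)
    exact (my_abs_smul_le l _).trans elp
  have e2 : (c • p + q) ⊓ u ≤ (c • p) ⊓ u + q ⊓ u :=
    my_inf_add_ineq (smul_nonneg hc.le hpnn) hqnn hu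
  have e3 : (c • p) ⊓ u = c • (p ⊓ (c⁻¹ • u)) := by
    rw [my_smul_inf c hc, smul_smul, mul_inv_cancel₀ hc.ne', one_smul]
  calc |l • x α + y α - (l • a + b)| ⊓ u ≤ (c • p + q) ⊓ u := inf_le_inf_right u e1
  _ ≤ (c • p) ⊓ u + q ⊓ u := e2
  _ = c • (p ⊓ (c⁻¹ • u)) + q ⊓ u := by rw [e3]
end

section
/- Let X be an Archimedean vector lattice equipped with a convergence θ (satisfying axioms (1)–(4)) which also satisfies property (*), and let e ∈ X₊. Then the following are equivalent: (i) e is a θ-unit; (ii) for every net (x_α)_{α∈A} in X, x_α →uθ 0 if and only if |x_α| ∧ e →θ 0; (iii) for every sequence (x_n)_{n∈ℕ} in X, x_n →uθ 0 if and only if |x_n| ∧ e →θ 0. -/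
open Filter

variable {X : Type*} [Lattice X] [AddCommGroup X]
  [CovariantClass X X (· + ·) (· ≤ ·)] [Module ℝ X] [PosSMulMono ℝ X]

/-- Property (*): whenever `0 ≤ x_α ≤ u_β + a (β, α)`, where `u_β →θ 0` and, for each
fixed `β`, the net `(a (β, α))_α` `θ`-converges to `0`, then `x_α →θ 0`. -/
def VLConvergence.StarProperty (θ : VLConvergence X) : Prop :=
  ∀ {ι κ : Type} [Preorder ι] [IsDirected ι (· ≤ ·)] [Nonempty ι]
    [Preorder κ] [IsDirected κ (· ≤ ·)] [Nonempty κ]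
    (x : ι → X) (u : κ → X) (a : κ → ι → X),
    (∀ α, 0 ≤ x α) → (∀ β α, x α ≤ u β + a β α) →
    θ.conv u 0 → (∀ β, θ.conv (a β) 0) → θ.conv x 0

/-- `e` is a `θ`-unit if `x ⊓ n • e →θ x` (as `n → ∞`) for every `x ∈ X₊`. -/
def VLConvergence.IsThetaUnit (θ : VLConvergence X) (e : X) : Prop :=
  ∀ x : X, 0 ≤ x → θ.conv (fun n : ℕ => x ⊓ n • e) x


set_option linter.unusedSectionVars false
set_option linter.unnecessarySimpa false

attribute [local instance] AddCommGroup.toDistribLattice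

lemma aux_inf_add_le {a b c : X} (ha : 0 ≤ a) (hb : 0 ≤ b) (hc : 0 ≤ c) :
    c ⊓ (a + b) ≤ c ⊓ a + c ⊓ b := by
  have h1 : c ⊓ (a + b) ≤ (c ⊓ a) + c :=
    inf_le_left.trans (le_add_of_nonneg_left (le_inf hc ha))
  have h2 : c ⊓ (a + b) ≤ (c ⊓ a) + b := by
    rw [inf_add c a b]
    exact le_inf (inf_le_left.trans (le_add_of_nonneg_right hb)) inf_le_right
  calc c ⊓ (a + b) ≤ ((c ⊓ a) + c) ⊓ ((c ⊓ a) + b) := le_inf h1 h2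
    _ = c ⊓ a + c ⊓ b := (add_inf c b (c ⊓ a)).symm

lemma aux_shift (a u v : X) : a ⊓ u ≤ (u - u ⊓ v) + a ⊓ v := by
  rw [sub_add_eq_add_sub, le_sub_iff_add_le]
  have h1 : a ⊓ u + u ⊓ v ≤ u + a := by
    rw [add_comm]; exact add_le_add inf_le_left inf_le_left
  have h2 : a ⊓ u + u ⊓ v ≤ u + v := add_le_add inf_le_right inf_le_right
  rw [add_inf a v u]
  exact le_inf h1 h2

lemma aux_nsmul {a e : X} (ha : 0 ≤ a) (he : 0 ≤ e) (n : ℕ) :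
    a ⊓ (n • e) ≤ n • (a ⊓ e) := by
  induction n with
  | zero => simpa using inf_le_right
  | succ n ih =>
    rw [succ_nsmul, succ_nsmul]
    calc a ⊓ (n • e + e) ≤ a ⊓ (n • e) + a ⊓ e :=
          aux_inf_add_le (nsmul_nonneg he n) he ha
      _ ≤ n • (a ⊓ e) + a ⊓ e := add_le_add_left ih _

lemma aux_clamp {x y b c : X} (hbc : b ≤ c) :
    |(x ⊔ b) ⊓ c - (y ⊔ b) ⊓ c| ≤ |x - y| ⊓ (c - b) := by
  refine le_inf ?_ ?_
  · calc |(x ⊔ b) ⊓ c - (y ⊔ b) ⊓ c| ≤ |(x ⊔ b) - (y ⊔ b)| := abs_inf_sub_inf_le_abs _ _ _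
      _ ≤ |x - y| := abs_sup_sub_sup_le_abs _ _ _
  · have hb1 : b ≤ (x ⊔ b) ⊓ c := le_inf le_sup_right hbc
    have hb2 : b ≤ (y ⊔ b) ⊓ c := le_inf le_sup_right hbc
    refine abs_le'.mpr ⟨sub_le_sub inf_le_right hb2, ?_⟩
    rw [neg_sub]
    exact sub_le_sub inf_le_right hb1

lemma aux_abs_clamp {f e : X} (he : 0 ≤ e) : |f| ⊓ e ≤ |(f ⊔ -e) ⊓ e| := by
  set g := (f ⊔ -e) ⊓ e with hg
  have hneg : -e ≤ (0:X) := neg_nonpos.mpr he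
  have hpos : g⁺ = f⁺ ⊓ e := by
    rw [posPart_def, posPart_def, hg, sup_inf_right, sup_assoc,
      sup_eq_right.mpr hneg, sup_eq_left.mpr he]
  have hng : -g = ((-f) ⊓ e) ⊔ -e := by
    rw [hg, neg_inf, neg_sup, neg_neg]
  have hnegpart : g⁻ = (-f)⁺ ⊓ e := by
    rw [negPart_def, posPart_def, hng, sup_assoc, sup_eq_right.mpr hneg,
      sup_inf_right, sup_eq_left.mpr he]
  have habs : |g| = f⁺ ⊓ e + (-f)⁺ ⊓ e := by
    rw [← posPart_add_negPart g, hpos, hnegpart]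
  rw [habs, ← posPart_add_negPart f, negPart_def, posPart_def, posPart_def,
    inf_comm _ e, inf_comm _ e, inf_comm _ e]
  exact aux_inf_add_le le_sup_right le_sup_right he

lemma aux_unit {x e : X} (hx : 0 ≤ x) (he : 0 ≤ e) (n : ℕ) :
    (n + 1) • ((x - x ⊓ (n • e)) ⊓ e) ≤ x := by
  set w := (x - x ⊓ (n • e)) ⊓ e with hw
  have hwle : ∀ k : ℕ, k ≤ n → w ≤ x - x ⊓ (k • e) := by
    intro k hk
    refine inf_le_left.trans (sub_le_sub_left (inf_le_inf_left x ?_) x)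
    exact nsmul_le_nsmul_left he hk
  have key : ∀ k : ℕ, k ≤ n → k • w ≤ x ⊓ (k • e) := by
    intro k hk
    induction k with
    | zero => simpa using le_inf hx le_rfl
    | succ k ih =>
      have hk' : k ≤ n := Nat.le_of_succ_le hk
      rw [succ_nsmul, succ_nsmul]
      refine le_inf ?_ (add_le_add ((ih hk').trans inf_le_right) inf_le_right)
      calc k • w + w ≤ x ⊓ (k • e) + (x - x ⊓ (k • e)) :=
            add_le_add (ih hk') (hwle k hk')
        _ = x := by abel
  rw [succ_nsmul]
  calc n • w + w ≤ x ⊓ (n • e) + (x - x ⊓ (n • e)) :=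
        add_le_add (key n le_rfl) inf_le_left
    _ = x := by abel

theorem stmt9 (hArch : IsArchimedeanVL X) (θ : VLConvergence X)
    (hstar : θ.StarProperty) (e : X) (he : 0 ≤ e) :
    List.TFAE [θ.IsThetaUnit e,
      ∀ (ι : Type) [Preorder ι] [IsDirected ι (· ≤ ·)] [Nonempty ι] (f : ι → X),
        θ.uconv f 0 ↔ θ.conv (fun α => |f α| ⊓ e) 0,
      ∀ f : ℕ → X, θ.uconv f 0 ↔ θ.conv (fun n => |f n| ⊓ e) 0] := by
  tfae_have 1 → 2 := by
    intro h1 ι _ _ _ f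
    constructor
    · -- uconv f 0 → |f α| ⊓ e →θ 0
      intro hu
      have h := hu (-e) e ((neg_nonpos.mpr he).trans he)
      have hval : ((0:X) ⊔ -e) ⊓ e = 0 := by
        rw [sup_eq_left.mpr (neg_nonpos.mpr he), inf_eq_left.mpr he]
      rw [hval] at h
      refine θ.conv_dominated _ _ h fun α => ?_
      rw [abs_of_nonneg (le_inf (abs_nonneg _) he)]
      exact aux_abs_clamp he
    · -- |f α| ⊓ e →θ 0 → uconv f 0
      intro hfe b c hbc
      have hu : (0:X) ≤ c - b := sub_nonneg.mpr hbc
      have hstep : θ.conv (fun α => |f α| ⊓ (c - b)) 0 := by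
        refine hstar (fun α => |f α| ⊓ (c - b)) (fun n : ℕ => (c - b) - (c - b) ⊓ (n • e))
          (fun n α => n • (|f α| ⊓ e)) (fun α => le_inf (abs_nonneg _) hu)
          (fun n α => ?_) ?_ ?_
        · exact (aux_shift (|f α|) (c - b) (n • e)).trans
            (add_le_add_right (aux_nsmul (abs_nonneg _) he n) _)
        · have h2 := θ.conv_add_smul (fun _ : ℕ => c - b) (fun n : ℕ => (c - b) ⊓ (n • e))
            (c - b) (c - b) (-1) (θ.conv_const (c - b)) (h1 (c - b) hu)
          simpa [neg_smul, one_smul, ← sub_eq_add_neg] using h2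
        · intro n
          have h2 := θ.conv_add_smul (fun _ : ι => (0:X)) (fun α => |f α| ⊓ e) 0 0
            ((n:ℝ)) (θ.conv_const 0) hfe
          simpa [Nat.cast_smul_eq_nsmul] using h2
      have hg : θ.conv (fun α => (f α ⊔ b) ⊓ c - ((0:X) ⊔ b) ⊓ c) 0 := by
        refine θ.conv_dominated (fun α => |f α| ⊓ (c - b)) _ hstep fun α => ?_
        calc |(f α ⊔ b) ⊓ c - ((0:X) ⊔ b) ⊓ c| ≤ |f α - 0| ⊓ (c - b) := aux_clamp hbc
          _ = |f α| ⊓ (c - b) := by rw [sub_zero]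
          _ ≤ |(|f α| ⊓ (c - b))| := le_abs_self _
      have h3 := θ.conv_add_smul (fun α => (f α ⊔ b) ⊓ c - ((0:X) ⊔ b) ⊓ c)
        (fun _ : ι => ((0:X) ⊔ b) ⊓ c) 0 (((0:X) ⊔ b) ⊓ c) 1 hg (θ.conv_const _)
      simpa [one_smul, sub_add_cancel] using h3
  tfae_have 2 → 3 := fun h => h ℕ
  tfae_have 3 → 1 := by
    intro h3 x hx
    have hxe : ∀ n : ℕ, 0 ≤ x ⊓ (n • e) := fun n => le_inf hx (nsmul_nonneg he n)
    set y : ℕ → X := fun n => x - x ⊓ (n • e) with hy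
    have hy0 : ∀ n, 0 ≤ y n := fun n => sub_nonneg.mpr inf_le_left
    have hyx : ∀ n, y n ≤ x := fun n => sub_le_self x (hxe n)
    have hbound : ∀ n : ℕ, y n ⊓ e ≤ ((n:ℝ) + 1)⁻¹ • x := by
      intro n
      have hne : ((n:ℝ) + 1) ≠ 0 := by positivity
      have h1 : ((n:ℝ) + 1)⁻¹ • ((n + 1) • (y n ⊓ e)) ≤ ((n:ℝ) + 1)⁻¹ • x :=
        smul_le_smul_of_nonneg_left (aux_unit hx he n) (by positivity)
      have h2 : ((n:ℝ) + 1)⁻¹ • ((n + 1) • (y n ⊓ e)) = y n ⊓ e := by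
        rw [← Nat.cast_smul_eq_nsmul ℝ (n + 1) (y n ⊓ e)]
        push_cast
        rw [inv_smul_smul₀ hne]
      rwa [h2] at h1
    have hsm : θ.conv (fun n : ℕ => ((n:ℝ) + 1)⁻¹ • x) 0 := by
      refine θ.conv_smul_zero _ x ?_
      simpa [one_div] using (tendsto_one_div_add_atTop_nhds_zero_nat :
        Tendsto (fun n : ℕ => 1 / ((n:ℝ) + 1)) atTop (nhds 0))
    have hinfe : θ.conv (fun n => |y n| ⊓ e) 0 := by
      refine θ.conv_dominated _ _ hsm fun n => ?_
      have hnn : (0:X) ≤ |y n| ⊓ e := le_inf (abs_nonneg _) he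
      rw [abs_of_nonneg hnn, abs_of_nonneg (hy0 n)]
      exact (hbound n).trans (le_abs_self _)
    have huy : θ.uconv y 0 := (h3 y).mpr hinfe
    have hy0' := huy 0 x hx
    have heq : (fun n => (y n ⊔ 0) ⊓ x) = y :=
      funext fun n => by rw [sup_eq_left.mpr (hy0 n), inf_eq_left.mpr (hyx n)]
    have hval : ((0:X) ⊔ 0) ⊓ x = 0 := by rw [sup_idem, inf_eq_left.mpr hx]
    rw [heq, hval] at hy0'
    have hfin := θ.conv_add_smul (fun _ : ℕ => x) y x 0 (-1) (θ.conv_const x) hy0'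
    have heq2 : (fun n : ℕ => x + (-1:ℝ) • y n) = fun n : ℕ => x ⊓ (n • e) :=
      funext fun n => by
        simp only [hy, neg_smul, one_smul, ← sub_eq_add_neg, sub_sub_cancel]
    rw [heq2] at hfin
    simpa using hfin
  tfae_finish
end

section
/- Let X be an Archimedean vector lattice equipped with a convergence θ (satisfying axioms (1)–(4)) which also satisfies property (*), and assume e ∈ X₊ is a θ-unit. Then for a positive net (x_α)_{α∈A} in X and x ∈ X₊ the following are equivalent: (i) x_α →uθ x; (ii) x_α ∧ k e →θ x ∧ k e for every k ∈ ℕ. -/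
open Filter

variable {X : Type*} [Lattice X] [AddCommGroup X]
  [CovariantClass X X (· + ·) (· ≤ ·)] [Module ℝ X] [PosSMulMono ℝ X]

namespace VLConvergence

variable (θ : VLConvergence X) {ι : Type} [Preorder ι] [IsDirected ι (· ≤ ·)] [Nonempty ι]

lemma conv_add' {f g : ι → X} {x y : X} (hf : θ.conv f x) (hg : θ.conv g y) :
    θ.conv (fun α => f α + g α) (x + y) := by
  have h := θ.conv_add_smul f g x y 1 hf hg
  simpa using h

lemma conv_sub' {f g : ι → X} {x y : X} (hf : θ.conv f x) (hg : θ.conv g y) :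
    θ.conv (fun α => f α - g α) (x - y) := by
  have h := θ.conv_add_smul f g x y (-1) hf hg
  simpa [sub_eq_add_neg] using h

lemma conv_abs' {f : ι → X} (hf : θ.conv f 0) : θ.conv (fun α => |f α|) 0 :=
  θ.conv_dominated f _ hf (fun α => by rw [abs_abs])

lemma conv_of_abs' {f : ι → X} (hf : θ.conv (fun α => |f α|) 0) : θ.conv f 0 :=
  θ.conv_dominated _ f hf (fun α => by rw [abs_abs])

end VLConvergence

/-- The key inequality. -/
lemma key_ineq (b c e x F : X) (hbc : b ≤ c) (m k : ℕ) :
    |((F ⊔ b) ⊓ c) - ((x ⊔ b) ⊓ c)| ≤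
      (((c - b) - (c - b) ⊓ k • e) + (2:ℝ) • (x - x ⊓ m • e)) +
      ((F ⊓ (m+k) • e - x ⊓ (m+k) • e) +
        ((x ⊓ m • e - F ⊓ m • e) + |F ⊓ m • e - x ⊓ m • e|)) := by
  have hPb : ∀ y : X, b ≤ (y ⊔ b) ⊓ c := fun y => le_inf le_sup_right hbc
  have hPc : ∀ y : X, (y ⊔ b) ⊓ c ≤ c := fun y => inf_le_right
  have hcontr : ∀ y z : X, |(y ⊔ b) ⊓ c - (z ⊔ b) ⊓ c| ≤ |y - z| := fun y z =>
    (abs_inf_sub_inf_le_abs _ _ _).trans (abs_sup_sub_sup_le_abs _ _ _)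
  have hbnd : ∀ y z : X, |(y ⊔ b) ⊓ c - (z ⊔ b) ⊓ c| ≤ c - b := fun y z =>
    abs_le'.mpr ⟨sub_le_sub (hPc y) (hPb z), by
      rw [neg_sub]; exact sub_le_sub (hPc z) (hPb y)⟩
  have tri : |((F ⊔ b) ⊓ c) - ((x ⊔ b) ⊓ c)| ≤
      |((F ⊔ b) ⊓ c) - ((F ⊓ m • e ⊔ b) ⊓ c)| +
      (|((F ⊓ m • e ⊔ b) ⊓ c) - ((x ⊓ m • e ⊔ b) ⊓ c)| +
       |((x ⊓ m • e ⊔ b) ⊓ c) - ((x ⊔ b) ⊓ c)|) := by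
    have e1 : ((F ⊔ b) ⊓ c) - ((x ⊔ b) ⊓ c) =
        (((F ⊔ b) ⊓ c) - ((F ⊓ m • e ⊔ b) ⊓ c)) +
        ((((F ⊓ m • e ⊔ b) ⊓ c) - ((x ⊓ m • e ⊔ b) ⊓ c)) +
         (((x ⊓ m • e ⊔ b) ⊓ c) - ((x ⊔ b) ⊓ c))) := by abel
    rw [e1]
    exact (abs_add_le _ _).trans (add_le_add_right (abs_add_le _ _) _)
  have step1 : |((F ⊔ b) ⊓ c) - ((F ⊓ m • e ⊔ b) ⊓ c)| ≤ (F - F ⊓ m • e) ⊓ (c - b) := by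
    refine le_inf ?_ (hbnd _ _)
    rw [← abs_of_nonneg (sub_nonneg.2 (inf_le_left : F ⊓ m • e ≤ F))]
    exact hcontr _ _
  have step2 : (F - F ⊓ m • e) ⊓ (c - b) ≤
      ((c - b) - (c - b) ⊓ k • e) + (F - F ⊓ m • e) ⊓ (k • e) := by
    have hwk : c - b ≤ ((c - b) - (c - b) ⊓ k • e) + k • e := by
      calc c - b = ((c - b) - (c - b) ⊓ k • e) + (c - b) ⊓ k • e := by abel
        _ ≤ _ := add_le_add_right inf_le_right _
    have h0 : (0:X) ≤ (c - b) - (c - b) ⊓ k • e := sub_nonneg.2 inf_le_left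
    calc (F - F ⊓ m • e) ⊓ (c - b)
        ≤ (F - F ⊓ m • e) ⊓ (((c - b) - (c - b) ⊓ k • e) + k • e) := inf_le_inf_left _ hwk
      _ ≤ (((c - b) - (c - b) ⊓ k • e) + (F - F ⊓ m • e)) ⊓
            (((c - b) - (c - b) ⊓ k • e) + k • e) :=
          le_inf (inf_le_left.trans (le_add_of_nonneg_left h0)) inf_le_right
      _ = ((c - b) - (c - b) ⊓ k • e) + (F - F ⊓ m • e) ⊓ (k • e) := (add_inf _ _ _).symm
  have step3 : (F - F ⊓ m • e) ⊓ (k • e) ≤ F ⊓ (m+k) • e - F ⊓ m • e := by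
    rw [le_sub_iff_add_le]
    calc (F - F ⊓ m • e) ⊓ (k • e) + F ⊓ m • e
        = (F - F ⊓ m • e + F ⊓ m • e) ⊓ (k • e + F ⊓ m • e) := inf_add _ _ _
      _ = F ⊓ (k • e + F ⊓ m • e) := by rw [sub_add_cancel]
      _ ≤ F ⊓ ((m+k) • e) := by
          refine inf_le_inf_left F ?_
          calc k • e + F ⊓ m • e ≤ k • e + m • e := add_le_add_right inf_le_right _
            _ = (m+k) • e := by rw [add_nsmul, add_comm]
  have step4 : F ⊓ (m+k) • e - F ⊓ m • e ≤
      (F ⊓ (m+k) • e - x ⊓ (m+k) • e) + ((x ⊓ m • e - F ⊓ m • e) + (x - x ⊓ m • e)) := by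
    calc F ⊓ (m+k) • e - F ⊓ m • e
        ≤ (F ⊓ (m+k) • e - F ⊓ m • e) + (x - x ⊓ (m+k) • e) :=
          le_add_of_nonneg_right (sub_nonneg.2 inf_le_left)
      _ ≤ (F ⊓ (m+k) • e - F ⊓ m • e) + (x - x ⊓ (m+k) • e)
            + ((x ⊓ (m+k) • e - x ⊓ m • e) - (x ⊓ (m+k) • e - x ⊓ m • e)) := by
          rw [sub_self, add_zero]
      _ = (F ⊓ (m+k) • e - x ⊓ (m+k) • e) + ((x ⊓ m • e - F ⊓ m • e) + (x - x ⊓ m • e)) + 0 := by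
          abel
      _ = _ := by rw [add_zero]
  have step6 : |((x ⊓ m • e ⊔ b) ⊓ c) - ((x ⊔ b) ⊓ c)| ≤ x - x ⊓ m • e := by
    have h1 : |x ⊓ m • e - x| = x - x ⊓ m • e := by
      rw [abs_sub_comm, abs_of_nonneg (sub_nonneg.2 inf_le_left)]
    exact (hcontr _ _).trans h1.le
  calc |((F ⊔ b) ⊓ c) - ((x ⊔ b) ⊓ c)|
      ≤ |((F ⊔ b) ⊓ c) - ((F ⊓ m • e ⊔ b) ⊓ c)| +
        (|((F ⊓ m • e ⊔ b) ⊓ c) - ((x ⊓ m • e ⊔ b) ⊓ c)| +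
         |((x ⊓ m • e ⊔ b) ⊓ c) - ((x ⊔ b) ⊓ c)|) := tri
    _ ≤ ((F - F ⊓ m • e) ⊓ (c - b)) + (|F ⊓ m • e - x ⊓ m • e| + (x - x ⊓ m • e)) :=
        add_le_add step1 (add_le_add (hcontr _ _) step6)
    _ ≤ (((c - b) - (c - b) ⊓ k • e) + (F - F ⊓ m • e) ⊓ (k • e)) +
        (|F ⊓ m • e - x ⊓ m • e| + (x - x ⊓ m • e)) := add_le_add_left step2 _
    _ ≤ (((c - b) - (c - b) ⊓ k • e) + (F ⊓ (m+k) • e - F ⊓ m • e)) +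
        (|F ⊓ m • e - x ⊓ m • e| + (x - x ⊓ m • e)) :=
        add_le_add_left (add_le_add_right step3 _) _
    _ ≤ (((c - b) - (c - b) ⊓ k • e) +
          ((F ⊓ (m+k) • e - x ⊓ (m+k) • e) + ((x ⊓ m • e - F ⊓ m • e) + (x - x ⊓ m • e)))) +
        (|F ⊓ m • e - x ⊓ m • e| + (x - x ⊓ m • e)) :=
        add_le_add_left (add_le_add_right step4 _) _
    _ = (((c - b) - (c - b) ⊓ k • e) + (2:ℝ) • (x - x ⊓ m • e)) +
        ((F ⊓ (m+k) • e - x ⊓ (m+k) • e) +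
          ((x ⊓ m • e - F ⊓ m • e) + |F ⊓ m • e - x ⊓ m • e|)) := by
        rw [two_smul]; abel

theorem stmt10 (hArch : IsArchimedeanVL X) (θ : VLConvergence X)
    (hstar : θ.StarProperty) (e : X) (he : 0 ≤ e) (hunit : θ.IsThetaUnit e)
    {ι : Type} [Preorder ι] [IsDirected ι (· ≤ ·)] [Nonempty ι]
    (f : ι → X) (x : X) (hf : ∀ α, 0 ≤ f α) (hx : 0 ≤ x) :
    θ.uconv f x ↔ ∀ k : ℕ, θ.conv (fun α => f α ⊓ k • e) (x ⊓ k • e) := by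
  constructor
  · intro h k
    have h0 := h 0 (k • e) (nsmul_nonneg he k)
    have hfun : (fun α => (f α ⊔ 0) ⊓ k • e) = fun α => f α ⊓ k • e :=
      funext fun α => by rw [sup_eq_left.mpr (hf α)]
    rw [hfun, sup_eq_left.mpr hx] at h0
    exact h0
  · intro h b c hbc
    have hw : (0:X) ≤ c - b := sub_nonneg.mpr hbc
    -- the majorizing nets
    set u : ℕ × ℕ → X := fun p =>
      ((c - b) - (c - b) ⊓ p.2 • e) + (2:ℝ) • (x - x ⊓ p.1 • e) with hu_def
    set a : ℕ × ℕ → ι → X := fun p α =>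
      (f α ⊓ (p.1 + p.2) • e - x ⊓ (p.1 + p.2) • e) +
        ((x ⊓ p.1 • e - f α ⊓ p.1 • e) + |f α ⊓ p.1 • e - x ⊓ p.1 • e|) with ha_def
    -- u converges to 0
    have hw1 : θ.conv (fun n : ℕ => (c - b) - (c - b) ⊓ n • e) 0 := by
      have := θ.conv_sub' (θ.conv_const (c - b)) (hunit (c - b) hw)
      simpa using this
    have hx1 : θ.conv (fun n : ℕ => x - x ⊓ n • e) 0 := by
      have := θ.conv_sub' (θ.conv_const x) (hunit x hx)
      simpa using this
    have hw2 : θ.conv (fun p : ℕ × ℕ => (c - b) - (c - b) ⊓ p.2 • e) 0 :=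
      θ.conv_subnet _ _ Prod.snd hw1 (fun k₀ => ⟨(0, k₀), fun p hp => hp.2⟩)
    have hx2 : θ.conv (fun p : ℕ × ℕ => x - x ⊓ p.1 • e) 0 :=
      θ.conv_subnet _ _ Prod.fst hx1 (fun m₀ => ⟨(m₀, 0), fun p hp => hp.1⟩)
    have hu : θ.conv u 0 := by
      have := θ.conv_add_smul _ _ 0 0 2 hw2 hx2
      simpa [hu_def] using this
    -- each a p converges to 0
    have ha : ∀ p : ℕ × ℕ, θ.conv (a p) 0 := by
      intro p
      have h1 : θ.conv (fun α => f α ⊓ (p.1 + p.2) • e - x ⊓ (p.1 + p.2) • e) 0 := by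
        have := θ.conv_sub' (h (p.1 + p.2)) (θ.conv_const (x ⊓ (p.1 + p.2) • e))
        simpa using this
      have h2 : θ.conv (fun α => x ⊓ p.1 • e - f α ⊓ p.1 • e) 0 := by
        have := θ.conv_sub' (θ.conv_const (x ⊓ p.1 • e)) (h p.1)
        simpa using this
      have h3 : θ.conv (fun α => |f α ⊓ p.1 • e - x ⊓ p.1 • e|) 0 := by
        refine θ.conv_abs' ?_
        have := θ.conv_sub' (h p.1) (θ.conv_const (x ⊓ p.1 • e))
        simpa using this
      have := θ.conv_add' h1 (θ.conv_add' h2 h3)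
      simpa [ha_def] using this
    -- apply property (*)
    have hg : θ.conv (fun α => |((f α ⊔ b) ⊓ c) - ((x ⊔ b) ⊓ c)|) 0 := by
      refine hstar _ u a (fun α => abs_nonneg _) (fun p α => ?_) hu ha
      simpa [hu_def, ha_def] using key_ineq b c e x (f α) hbc p.1 p.2
    have hg' : θ.conv (fun α => ((f α ⊔ b) ⊓ c) - ((x ⊔ b) ⊓ c)) 0 := θ.conv_of_abs' hg
    have := θ.conv_add' hg' (θ.conv_const ((x ⊔ b) ⊓ c))
    simpa using this
end

section
/- Let X be an Archimedean vector lattice equipped with a convergence θ (satisfying axioms (1)–(4)) which also satisfies property (*), and let Y be a vector sublattice of X that is θ-dense in X (every x ∈ X is the θ-limit of some net in Y). If (y_α) is a net in Y with y_α →uθ 0 in Y (i.e. |y_α| ∧ u →θ 0 for all u ∈ Y₊), then y_α →uθ 0 in X (i.e. |y_α| ∧ u →θ 0 for all u ∈ X₊). -/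
open Filter

variable {X : Type*} [Lattice X] [AddCommGroup X]
  [CovariantClass X X (· + ·) (· ≤ ·)] [Module ℝ X] [PosSMulMono ℝ X]

/-- A bundled nonempty directed preordered index type (a "directed set"). -/
structure DirIndex where
  carrier : Type
  [pre : Preorder carrier]
  [dir : IsDirected carrier (· ≤ ·)]
  [ne : Nonempty carrier]

attribute [instance] DirIndex.pre DirIndex.dir DirIndex.ne

theorem stmt12 (hArch : IsArchimedeanVL X) (θ : VLConvergence X)
    (hstar : θ.StarProperty)
    (Y : Submodule ℝ X) (hYlat : ∀ a b : X, a ∈ Y → b ∈ Y → a ⊔ b ∈ Y)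
    (hdense : ∀ x : X, ∃ (A : DirIndex) (g : A.carrier → X),
      (∀ α, g α ∈ Y) ∧ θ.conv g x)
    {ι : Type} [Preorder ι] [IsDirected ι (· ≤ ·)] [Nonempty ι]
    (f : ι → X) (hfY : ∀ α, f α ∈ Y)
    (h : ∀ u : X, u ∈ Y → 0 ≤ u → θ.conv (fun α => |f α| ⊓ u) 0) :
    ∀ u : X, 0 ≤ u → θ.conv (fun α => |f α| ⊓ u) 0 := by
  intro u hu
  obtain ⟨A, g, hgY, hgconv⟩ := hdense u
  have habsY : ∀ β, |g β| ∈ Y := fun β => by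
    have := hYlat (g β) (-(g β)) (hgY β) (Y.neg_mem (hgY β))
    simpa [abs] using this
  have hsub : θ.conv (fun β => u - g β) 0 := by
    have := θ.conv_add_smul (fun _ : A.carrier => u) g u u (-1)
      (θ.conv_const u) hgconv
    simpa [sub_eq_add_neg] using this
  have habs0 : θ.conv (fun β => |u - g β|) 0 :=
    θ.conv_dominated _ _ hsub (fun β => by rw [abs_abs])
  have ha : ∀ β, θ.conv (fun α => |f α| ⊓ |g β|) 0 := fun β =>
    h _ (habsY β) (abs_nonneg _)
  refine hstar (fun α => |f α| ⊓ u) (fun β => |u - g β|) (fun β α => |f α| ⊓ |g β|)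
    (fun α => le_inf (abs_nonneg _) hu) ?_ habs0 ha
  intro β α
  have h1 : |f α| ⊓ u - |f α| ⊓ |g β| ≤ abs (u - |g β|) := by
    calc |f α| ⊓ u - |f α| ⊓ |g β| ≤ abs (u ⊓ |f α| - |g β| ⊓ |f α|) := by
          rw [inf_comm u, inf_comm (|g β|)]; exact le_abs_self _
      _ ≤ abs (u - |g β|) := abs_inf_sub_inf_le_abs _ _ _
  have h2 : abs (u - |g β|) ≤ |u - g β| := by
    calc abs (u - |g β|) = abs (|u| - |g β|) := by rw [abs_of_nonneg hu]
      _ ≤ |u - g β| := abs_abs_sub_abs_le _ _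
  exact sub_le_iff_le_add.mp (h1.trans h2)
end

section
/- Let (X_i, θ_i)_{i∈I} be a family of Archimedean vector lattices, each equipped with a convergence θ_i satisfying axioms (1)–(4). Equip the product X = ∏_{i∈I} X_i (with componentwise order and operations) with the product convergence θ: a net x_α →θ x iff p_i(x_α) →θ_i p_i(x) for every i ∈ I, where p_i is the i-th coordinate projection. Then for any net (x_α) in X and x ∈ X: x_α →uθ x if and only if p_i(x_α) →uθ_i p_i(x) for every i ∈ I; that is, uθ coincides with the product of the convergences uθ_i. -/
open Filter

variable {X : Type*} [Lattice X] [AddCommGroup X]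
  [CovariantClass X X (· + ·) (· ≤ ·)] [Module ℝ X] [PosSMulMono ℝ X]

theorem stmt16 {I : Type*} (Y : I → Type*)
    [∀ i, Lattice (Y i)] [∀ i, AddCommGroup (Y i)]
    [∀ i, CovariantClass (Y i) (Y i) (· + ·) (· ≤ ·)]
    [∀ i, Module ℝ (Y i)] [∀ i, PosSMulMono ℝ (Y i)]
    (hArch : ∀ i, IsArchimedeanVL (Y i))
    (θ : ∀ i, VLConvergence (Y i))
    (Θ : VLConvergence (∀ i, Y i))
    (hΘ : ∀ (ι : Type) [Preorder ι] [IsDirected ι (· ≤ ·)] [Nonempty ι]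
      (f : ι → ∀ i, Y i) (x : ∀ i, Y i),
      Θ.conv f x ↔ ∀ i, (θ i).conv (fun α => f α i) (x i))
    {ι : Type} [Preorder ι] [IsDirected ι (· ≤ ·)] [Nonempty ι]
    (f : ι → ∀ i, Y i) (x : ∀ i, Y i) :
    Θ.uconv f x ↔ ∀ i, (θ i).uconv (fun α => f α i) (x i) := by
  classical
  constructor
  · intro h i b c hbc
    have hBC : Function.update (0 : ∀ j, Y j) i b ≤ Function.update (0 : ∀ j, Y j) i c := by
      intro j
      by_cases hj : j = i
      · subst hj; simpa using hbc
      · simp [Function.update_of_ne hj]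
    have := (hΘ ι _ _).mp (h _ _ hBC) i
    simpa using this
  · intro h B C hBC
    rw [hΘ]
    intro i
    have := h i (B i) (C i) (hBC i)
    simpa using this
end
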